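/- Let k ≥ 2, m ≥ 2, n = m(k+1), 1 ≤ j ≤ m−1. Let π be the degree sequence of G = K_j + (K_{c_1} ∪ ... ∪ K_{c_{kj+1}}) with c_1 ≤ ... ≤ c_{kj+1} summing to n−j, and suppose the largest noncomplete degree d = c_{kj+1} + j − 1 satisfies d ≥ n − k(j+1). Then π is not majorized by the degree sequence of any graph K_i + (K_{c'_1} ∪ ... ∪ K_{c'_{ki+1}}) on n vertices with i ≥ j+1. -/

import Mathlib

/-- The degree multiset `(c_1+j-1)^{c_1} … (c_s+j-1)^{c_s} (n-1)^j` of the graph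
`K_j + (K_{c_1} ∪ … ∪ K_{c_s})` on `n` vertices. -/
def degSeqMS (n j : ℕ) {s : ℕ} (c : Fin s → ℕ) : Multiset ℕ :=
  (∑ i : Fin s, Multiset.replicate (c i) (c i + j - 1)) + Multiset.replicate j (n - 1)

/-- The `i`-th entry (0-based) of the multiset `M` sorted nondecreasingly. -/
def sortedNth (M : Multiset ℕ) (i : ℕ) : ℕ :=
  (Multiset.sort M (· ≤ ·)).getD i 0

lemma countP_sort (M : Multiset ℕ) (p : ℕ → Prop) [DecidablePred p] :
    (Multiset.sort M (· ≤ ·)).countP (fun x => decide (p x)) = (M.filter p).card := by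
  rw [← Multiset.countP_eq_card_filter]
  conv_rhs => rw [← Multiset.sort_eq M (· ≤ ·)]
  rw [Multiset.coe_countP]

lemma le_sortedNth (M : Multiset ℕ) (d t l : ℕ)
    (h1 : t ≤ (M.filter (fun x => d ≤ x)).card) (h2 : Multiset.card M ≤ l + t)
    (h3 : l < Multiset.card M) : d ≤ sortedNth M l := by
  set L := Multiset.sort M (· ≤ ·) with hLdef
  have hlen : L.length = Multiset.card M := Multiset.length_sort _
  have hsorted : L.Pairwise (· ≤ ·) := Multiset.pairwise_sort _ _
  have hl : l < L.length := by omega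
  by_contra hcon
  push_neg at hcon
  have hval : L[l] < d := by
    have he : sortedNth M l = L[l] := by
      simp [sortedNth, ← hLdef, List.getD_eq_getElem?_getD, List.getElem?_eq_getElem hl]
    omega
  have htake : ∀ x ∈ L.take (l + 1), x < d := by
    intro x hx
    obtain ⟨q, hq, hxeq⟩ := List.mem_iff_getElem.mp hx
    have hq' : q < L.length := by simp at hq; omega
    have hql : q ≤ l := by simp at hq; omega
    have heq : (L.take (l + 1))[q] = L[q]'hq' := List.getElem_take (h := hq)
    have hle : L[q] ≤ L[l] :=
      hsorted.rel_get_of_le (a := ⟨q, hq'⟩) (b := ⟨l, hl⟩) (by rw [Fin.mk_le_mk]; omega)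
    omega
  have hcnt : l + 1 ≤ L.countP (fun x => decide (x < d)) := by
    have hsub := (List.take_sublist (l + 1) L).countP_le (p := fun x => decide (x < d))
    have hall : (L.take (l + 1)).countP (fun x => decide (x < d)) = (L.take (l + 1)).length :=
      List.countP_eq_length.mpr (by intro a ha; simpa using htake a ha)
    have hlt : (L.take (l + 1)).length = l + 1 := by
      simp only [List.length_take]; omega
    omega
  have hsplit : L.countP (fun x => decide (d ≤ x)) + L.countP (fun x => decide (x < d))
      = L.length := by
    rw [List.length_eq_countP_add_countP (fun x => decide (d ≤ x))]
    congr 1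
    apply List.countP_congr
    intro a _
    simp only [decide_eq_true_eq, decide_eq_decide]
    omega
  have hfc := countP_sort M (fun x => d ≤ x)
  rw [← hLdef] at hfc
  omega

lemma sortedNth_le (M : Multiset ℕ) (b l : ℕ)
    (h1 : l + (M.filter (fun x => b < x)).card < Multiset.card M) : sortedNth M l ≤ b := by
  set L := Multiset.sort M (· ≤ ·) with hLdef
  have hlen : L.length = Multiset.card M := Multiset.length_sort _
  have hsorted : L.Pairwise (· ≤ ·) := Multiset.pairwise_sort _ _
  have hl : l < L.length := by omega
  by_contra hcon
  push_neg at hcon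
  have hval : b < L[l] := by
    have he : sortedNth M l = L[l] := by
      simp [sortedNth, ← hLdef, List.getD_eq_getElem?_getD, List.getElem?_eq_getElem hl]
    omega
  have hdrop : ∀ x ∈ L.drop l, b < x := by
    intro x hx
    obtain ⟨q, hq, hxeq⟩ := List.mem_iff_getElem.mp hx
    have hq' : l + q < L.length := by simp at hq; omega
    have heq : (L.drop l)[q] = L[l + q]'hq' := List.getElem_drop (h := hq)
    have hle : L[l] ≤ L[l + q] :=
      hsorted.rel_get_of_le (a := ⟨l, hl⟩) (b := ⟨l + q, hq'⟩) (by rw [Fin.mk_le_mk]; omega)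
    omega
  have hcnt : L.length - l ≤ L.countP (fun x => decide (b < x)) := by
    have hsub := (List.drop_sublist l L).countP_le (p := fun x => decide (b < x))
    have hall : (L.drop l).countP (fun x => decide (b < x)) = (L.drop l).length :=
      List.countP_eq_length.mpr (by intro a ha; simpa using hdrop a ha)
    have hlt : (L.drop l).length = L.length - l := by simp
    omega
  have hfc := countP_sort M (fun x => b < x)
  rw [← hLdef] at hfc
  omega

lemma card_degSeqMS (n j : ℕ) {s : ℕ} (c : Fin s → ℕ) :
    Multiset.card (degSeqMS n j c) = (∑ i, c i) + j := by
  simp [degSeqMS]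

theorem stmt13 (k m : ℕ) (hk : 2 ≤ k) (hm : 2 ≤ m) (n : ℕ) (hn : n = m * (k + 1))
    (j : ℕ) (hj1 : 1 ≤ j) (hjm : j ≤ m - 1)
    (c : Fin (k * j + 1) → ℕ) (hc : ∀ i, 1 ≤ c i) (hmc : Monotone c)
    (hsum : (∑ i, c i) = n - j)
    -- the largest noncomplete degree `d = c_{kj+1} + j - 1` satisfies `d ≥ n - k(j+1)`
    (hd : n - k * (j + 1) ≤
      c ⟨k * j, Nat.lt_succ_self _⟩ + j - 1) :
    ∀ i : ℕ, j + 1 ≤ i → ∀ c' : Fin (k * i + 1) → ℕ,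
      (∀ l, 1 ≤ c' l) → (∑ l, c' l) = n - i →
      ¬ (∀ l : ℕ, sortedNth (degSeqMS n j c) l ≤ sortedNth (degSeqMS n i c') l) := by
  intro i hi c' hc' hsum' hmaj
  set top : Fin (k * j + 1) := ⟨k * j, Nat.lt_succ_self _⟩ with htop
  -- basic cardinality facts
  have hcard_lb : (k * j + 1 : ℕ) ≤ ∑ x, c x := by
    calc (k * j + 1 : ℕ) = ∑ _x : Fin (k * j + 1), 1 := by simp
    _ ≤ ∑ x, c x := Finset.sum_le_sum fun x _ => hc x
  have hcard_lb' : (k * i + 1 : ℕ) ≤ ∑ x, c' x := by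
    calc (k * i + 1 : ℕ) = ∑ _x : Fin (k * i + 1), 1 := by simp
    _ ≤ ∑ x, c' x := Finset.sum_le_sum fun x _ => hc' x
  have hnj : k * j + 1 + j ≤ n := by omega
  have hni : k * i + 1 + i ≤ n := by omega
  -- i < m
  have him : i < m := by
    by_contra hcon
    push_neg at hcon
    have h1 : k * m ≤ k * i := Nat.mul_le_mul_left k hcon
    have h2 : n = k * m + m := by rw [hn]; ring
    omega
  -- k*(j+1) + i < n
  have hkji : k * (j + 1) + i < n := by
    have h1 : k * (j + 1) ≤ k * m := Nat.mul_le_mul_left k (by omega)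
    have h2 : n = k * m + m := by rw [hn]; ring
    omega
  have hBA : k * (j + 1) ≤ k * i := Nat.mul_le_mul_left k hi
  -- c top is the largest entry, and c top ≤ sum
  have hctop_le : c top ≤ ∑ x, c x :=
    Finset.single_le_sum (fun x _ => Nat.zero_le _) (Finset.mem_univ top)
  -- each c' l is small: c' l + k*i ≤ ∑ c'
  have hc'small : ∀ l, c' l + k * i ≤ ∑ x, c' x := by
    intro l
    have h1 : ∑ x, c' x = c' l + ∑ x ∈ Finset.univ.erase l, c' x :=
      (Finset.add_sum_erase _ _ (Finset.mem_univ l)).symm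
    have h2 : (k * i : ℕ) ≤ ∑ x ∈ Finset.univ.erase l, c' x := by
      calc (k * i : ℕ) = ∑ _x ∈ Finset.univ.erase l, 1 := by
            rw [Finset.sum_const, smul_eq_mul, mul_one,
              Finset.card_erase_of_mem (Finset.mem_univ l)]
            simp
      _ ≤ ∑ x ∈ Finset.univ.erase l, c' x := Finset.sum_le_sum fun x _ => hc' x
    omega
  set d : ℕ := c top + j - 1 with hdd
  set l0 : ℕ := n - i - 1 with hl0
  -- cardinalities
  have hcardM : Multiset.card (degSeqMS n j c) = n := by
    rw [card_degSeqMS, hsum]; omega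
  have hcardM' : Multiset.card (degSeqMS n i c') = n := by
    rw [card_degSeqMS, hsum']; omega
  -- lower bound on the filter count of degSeqMS n j c for elements ≥ d
  have hfilt1 : c top + j ≤ ((degSeqMS n j c).filter (fun x => d ≤ x)).card := by
    have hsub : Multiset.replicate (c top) (c top + j - 1) + Multiset.replicate j (n - 1)
        ≤ degSeqMS n j c := by
      unfold degSeqMS
      apply add_le_add_left
      exact Finset.single_le_sum (f := fun x => Multiset.replicate (c x) (c x + j - 1))
        (fun x _ => Multiset.zero_le _) (Finset.mem_univ top)
    have h1 : ((Multiset.replicate (c top) (c top + j - 1) +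
        Multiset.replicate j (n - 1)).filter (fun x => d ≤ x)).card = c top + j := by
      rw [Multiset.filter_add]
      have e1 : (Multiset.replicate (c top) (c top + j - 1)).filter (fun x => d ≤ x)
          = Multiset.replicate (c top) (c top + j - 1) := by
        rw [Multiset.filter_eq_self]
        intro a ha
        rw [Multiset.eq_of_mem_replicate ha]
      have e2 : (Multiset.replicate j (n - 1)).filter (fun x => d ≤ x)
          = Multiset.replicate j (n - 1) := by
        rw [Multiset.filter_eq_self]
        intro a ha
        rw [Multiset.eq_of_mem_replicate ha]
        omega
      rw [e1, e2]
      simp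
    rw [← h1]
    exact Multiset.card_le_card (Multiset.filter_le_filter _ hsub)
  -- upper bound on the filter count of degSeqMS n i c' for elements > n - k*i - 1
  have hfilt2 : ((degSeqMS n i c').filter (fun x => n - k * i - 1 < x)).card ≤ i := by
    unfold degSeqMS
    rw [Multiset.filter_add]
    have e1 : (∑ x : Fin (k * i + 1), Multiset.replicate (c' x) (c' x + i - 1)).filter
        (fun x => n - k * i - 1 < x) = 0 := by
      rw [Multiset.filter_eq_nil]
      intro a ha
      rw [Multiset.mem_sum] at ha
      obtain ⟨x, -, hax⟩ := ha
      rw [Multiset.eq_of_mem_replicate hax]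
      have := hc'small x
      omega
    rw [e1]
    simp only [Multiset.card_add, Multiset.card_zero, zero_add]
    calc ((Multiset.replicate i (n - 1)).filter (fun x => n - k * i - 1 < x)).card
        ≤ Multiset.card (Multiset.replicate i (n - 1)) :=
          Multiset.card_le_card (Multiset.filter_le _ _)
      _ = i := Multiset.card_replicate _ _
  -- the key chain of inequalities
  have hA : d ≤ sortedNth (degSeqMS n j c) l0 := by
    apply le_sortedNth _ _ (c top + j) _ hfilt1
    · omega
    · omega
  have hB : sortedNth (degSeqMS n i c') l0 ≤ n - k * i - 1 := by
    apply sortedNth_le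
    omega
  have := hmaj l0
  omega
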